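/- Let g:[0,1]^n → ℝ be invariant under any permutation of its first t coordinates and continuously differentiable. Then ∫₀¹ ∂_i g(s·𝟏) ds = ∫₀¹ ∂_j g(s·𝟏) ds for all i, j ∈ {1,…,t}. -/

import Mathlib

/-- Symmetry of integrated gradients: if `g` is invariant under every
permutation of its first `t` coordinates, then the integrated gradient
attributions of the first `t` coordinates along the diagonal path are equal. -/
theorem stmt_7 {n : ℕ} (t : ℕ) (g : (Fin n → ℝ) → ℝ) (hg : ContDiff ℝ 1 g)
    (hsym : ∀ σ : Equiv.Perm (Fin n), (∀ k : Fin n, t ≤ (k : ℕ) → σ k = k) →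
      ∀ w : Fin n → ℝ, g (w ∘ σ) = g w)
    (i j : Fin n) (hi : (i : ℕ) < t) (hj : (j : ℕ) < t) :
    (∫ s in (0:ℝ)..1, fderiv ℝ g (fun _ => s) (Pi.single i 1)) =
      ∫ s in (0:ℝ)..1, fderiv ℝ g (fun _ => s) (Pi.single j 1) := by
  set σ : Equiv.Perm (Fin n) := Equiv.swap i j with hσ
  -- the continuous linear map of precomposition by σ
  let L : (Fin n → ℝ) →L[ℝ] (Fin n → ℝ) :=
    { toFun := fun w => w ∘ σ
      map_add' := fun x y => rfl
      map_smul' := fun c x => rfl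
      cont := by
        apply continuous_pi
        intro k
        exact continuous_apply (σ k) }
  have hfix : ∀ k : Fin n, t ≤ (k : ℕ) → σ k = k := by
    intro k hk
    apply Equiv.swap_apply_of_ne_of_ne
    · rintro rfl; omega
    · rintro rfl; omega
  have hgl : ∀ w, g (L w) = g w := fun w => hsym σ hfix w
  have hgL : g ∘ L = g := funext hgl
  have key : ∀ s : ℝ, fderiv ℝ g (fun _ => s) (Pi.single i 1)
      = fderiv ℝ g (fun _ => s) (Pi.single j 1) := by
    intro s
    have hc : L (fun _ : Fin n => s) = (fun _ => s) := rfl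
    have hdg : DifferentiableAt ℝ g (L (fun _ : Fin n => s)) :=
      (hg.differentiable one_ne_zero) _
    have hcomp : fderiv ℝ (g ∘ L) (fun _ : Fin n => s)
        = (fderiv ℝ g (fun _ => s)).comp (L : (Fin n → ℝ) →L[ℝ] (Fin n → ℝ)) := by
      rw [fderiv_comp _ (hc ▸ hdg) L.differentiableAt, L.fderiv, hc]
    have heq : fderiv ℝ g (fun _ : Fin n => s)
        = (fderiv ℝ g (fun _ => s)).comp L := by
      rw [← hcomp, hgL]
    have hLij : L (Pi.single i 1) = Pi.single j 1 := by
      funext k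
      simp only [L, ContinuousLinearMap.coe_mk', LinearMap.coe_mk, AddHom.coe_mk,
        Function.comp_apply]
      by_cases hki : k = i
      · subst hki
        simp [hσ, Equiv.swap_apply_left, Pi.single_apply, eq_comm]
      · by_cases hkj : k = j
        · subst hkj
          simp [hσ, Equiv.swap_apply_right, Pi.single_apply, eq_comm]
        · rw [hσ, Equiv.swap_apply_of_ne_of_ne hki hkj]
          simp [Pi.single_apply, hki, hkj]
    conv_lhs => rw [heq]
    simp [ContinuousLinearMap.comp_apply, hLij]
  simp only [key]
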